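/- Let X = (M, X, ⊥) be a non-trivial concurrent system with Σ_α ≠ ∅ for every state α. If the dominant valuation f (f_α(x) = 1 iff α·x ≠ ⊥) is probabilistic, then X is deterministic, i.e., for every state α the poset of executable cliques 𝒞_α has a unique maximal element (equivalently any two enabled letters at α commute). -/

import Mathlib

open scoped Classical

section TracePre

variable {A : Type*}

/-- The elementary swap relation from an independence relation. -/
def swapRel (I : A → A → Prop) : FreeMonoid A → FreeMonoid A → Prop :=
  fun x y => ∃ a b, I a b ∧ x = FreeMonoid.of a * FreeMonoid.of b ∧
    y = FreeMonoid.of b * FreeMonoid.of a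

/-- The congruence generated by the commutations. -/
def traceCon (I : A → A → Prop) : Con (FreeMonoid A) := conGen (swapRel I)

/-- The trace monoid `M(A, I)`. -/
abbrev TraceMonoid (A : Type*) (I : A → A → Prop) := (traceCon I).Quotient

/-- Image of a letter in the trace monoid. -/
def trOf (I : A → A → Prop) (a : A) : TraceMonoid A I := (traceCon I).mk' (FreeMonoid.of a)

theorem traceCon_le_ker {M : Type*} [CommMonoid M] {I : A → A → Prop}
    (φ : FreeMonoid A →* M) : traceCon I ≤ Con.ker φ := by
  apply Con.conGen_le.2
  intro x y hxy
  obtain ⟨a, b, _, rfl, rfl⟩ := hxy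
  simp [Con.ker_rel, map_mul, mul_comm]

/-- Length of a trace. -/
noncomputable def trLen {I : A → A → Prop} (x : TraceMonoid A I) : ℕ :=
  Multiplicative.toAdd
    ((Con.lift (traceCon I) (FreeMonoid.lift fun _ => Multiplicative.ofAdd (1 : ℕ))
      (traceCon_le_ker _)) x)

/-- Number of occurrences of the letter `a` in a trace. -/
noncomputable def trCount {I : A → A → Prop} (a : A) (x : TraceMonoid A I) : ℕ :=
  Multiplicative.toAdd
    ((Con.lift (traceCon I)
      (FreeMonoid.lift fun b => Multiplicative.ofAdd (if b = a then (1 : ℕ) else 0))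
      (traceCon_le_ker _)) x)

/-- Lists of pairwise distinct, pairwise independent letters. -/
def IsCliqueList (I : A → A → Prop) (l : List A) : Prop :=
  l.Pairwise fun a b => a ≠ b ∧ I a b

/-- The trace associated with a list of letters. -/
def listProd (I : A → A → Prop) (l : List A) : TraceMonoid A I := (l.map (trOf I)).prod

/-- A clique of the trace monoid. -/
def IsClique (I : A → A → Prop) (x : TraceMonoid A I) : Prop :=
  ∃ l, IsCliqueList I l ∧ x = listProd I l

/-- The trace associated with a finite set of letters. -/
noncomputable def fprod (I : A → A → Prop) (c : Finset A) : TraceMonoid A I :=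
  listProd I c.toList

/-- Normal pairs of cliques, cliques being represented by finite sets of letters. -/
def NormalF (I : A → A → Prop) (c d : Finset A) : Prop :=
  ∀ b ∈ d, ∃ a ∈ c, (¬ I a b ∨ a = b)

/-- Greatest lower bound for left divisibility. -/
def IsGlbDvd {M : Type*} [Monoid M] (x y g : M) : Prop :=
  g ∣ x ∧ g ∣ y ∧ ∀ w, w ∣ x → w ∣ y → w ∣ g

/-- Least upper bound for left divisibility. -/
def IsLubDvd {M : Type*} [Monoid M] (x y z : M) : Prop :=
  x ∣ z ∧ y ∣ z ∧ ∀ w, x ∣ w → y ∣ w → z ∣ w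

end TracePre

section CSPre

variable {A X : Type*}

/-- A concurrent system: a right action of a trace monoid on `X ∪ {⊥}`,
`⊥` being encoded by `none`. -/
structure CS (A : Type*) (I : A → A → Prop) (X : Type*) where
  act : Option X → TraceMonoid A I → Option X
  act_one : ∀ s, act s 1 = s
  act_mul : ∀ s x y, act s (x * y) = act (act s x) y
  act_bot : ∀ x, act none x = none

variable {I : A → A → Prop}

/-- The letter `a` is enabled at state `α`. -/
def CS.Enabled (S : CS A I X) (α : X) (a : A) : Prop := S.act (some α) (trOf I a) ≠ none

/-- The set of executions starting from `α`. -/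
def CS.MSet (S : CS A I X) (α : X) : Set (TraceMonoid A I) :=
  {x | S.act (some α) x ≠ none}

/-- A deterministic concurrent system: any two letters enabled at a common state
commute. -/
def CS.Deterministic (S : CS A I X) : Prop :=
  ∀ (α : X) (a b : A), a ≠ b → S.Enabled α a → S.Enabled α b → I a b

/-- The finite set of letters enabled at an extended state. -/
noncomputable def CS.enabledFinset [Fintype A] (S : CS A I X) (s : Option X) : Finset A :=
  Finset.univ.filter fun a => S.act s (trOf I a) ≠ none

/-- A generalised execution from `α`, as an infinite normal sequence of cliques
all of whose finite prefixes are executions. -/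
def CS.IsGenExec (S : CS A I X) (α : X) (c : ℕ → Finset A) : Prop :=
  (∀ i, (↑(c i) : Set A).Pairwise I) ∧ (∀ i, NormalF I (c i) (c (i + 1))) ∧
    ∀ k, S.act (some α) (((List.range k).map fun i => fprod I (c i)).prod) ≠ none

/-- An infinite execution from `α`: a generalised execution with all cliques nonempty. -/
def CS.IsInfExec (S : CS A I X) (α : X) (c : ℕ → Finset A) : Prop :=
  S.IsGenExec α c ∧ ∀ i, c i ≠ ∅

end CSPre

section Aux

variable {A : Type*} [DecidableEq A]

lemma sum_powerset_neg_one_pow_card_real {B : Type*} [DecidableEq B] (x : Finset B) :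
    ∑ m ∈ x.powerset, ((-1 : ℝ)) ^ m.card = if x = ∅ then 1 else 0 := by
  have h := Finset.sum_powerset_neg_one_pow_card (x := x)
  calc ∑ m ∈ x.powerset, ((-1 : ℝ)) ^ m.card
      = ((∑ m ∈ x.powerset, (-1 : ℤ) ^ m.card : ℤ) : ℝ) := by push_cast; rfl
    _ = _ := by rw [h]; split_ifs <;> norm_num

lemma sum_interval_neg_one (c c'' : Finset A) (h : c ⊆ c'') :
    ∑ c' ∈ Finset.Icc c c'', ((-1 : ℝ)) ^ (c''.card - c'.card) =
      if c'' = c then 1 else 0 := by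
  classical
  have hmap : ∑ c' ∈ Finset.Icc c c'', ((-1 : ℝ)) ^ (c''.card - c'.card) =
      ∑ t ∈ (c'' \ c).powerset, ((-1 : ℝ)) ^ ((c'' \ c).card - t.card) := by
    refine Finset.sum_nbij' (fun c' => c' \ c) (fun t => t ∪ c) ?_ ?_ ?_ ?_ ?_
    · intro a ha
      rw [Finset.mem_Icc] at ha
      exact Finset.mem_powerset.mpr (Finset.sdiff_subset_sdiff ha.2 (subset_refl c))
    · intro t ht
      rw [Finset.mem_powerset] at ht
      rw [Finset.mem_Icc]
      refine ⟨Finset.subset_union_right, Finset.union_subset (ht.trans Finset.sdiff_subset) h⟩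
    · intro a ha
      rw [Finset.mem_Icc] at ha
      exact Finset.sdiff_union_of_subset ha.1
    · intro t ht
      rw [Finset.mem_powerset] at ht
      have hdisj : Disjoint t c := Finset.disjoint_of_subset_left ht Finset.sdiff_disjoint
      show (t ∪ c) \ c = t
      rw [Finset.union_sdiff_right, Finset.sdiff_eq_self_of_disjoint hdisj]
    · intro a ha
      rw [Finset.mem_Icc] at ha
      congr 1
      have h1 : c.card ≤ a.card := Finset.card_le_card ha.1
      have h2 : a.card ≤ c''.card := Finset.card_le_card ha.2
      rw [Finset.card_sdiff_of_subset h, Finset.card_sdiff_of_subset ha.1]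
      omega
  rw [hmap]
  have hterm : ∀ t ∈ (c'' \ c).powerset,
      ((-1 : ℝ)) ^ ((c'' \ c).card - t.card) =
        ((-1 : ℝ)) ^ (c'' \ c).card * ((-1 : ℝ)) ^ t.card := by
    intro t ht
    rw [Finset.mem_powerset] at ht
    have h1 : t.card ≤ (c'' \ c).card := Finset.card_le_card ht
    have h2 : (c'' \ c).card + t.card = ((c'' \ c).card - t.card) + 2 * t.card := by omega
    rw [← pow_add, h2, pow_add, pow_mul]
    norm_num
  rw [Finset.sum_congr rfl hterm, ← Finset.mul_sum, sum_powerset_neg_one_pow_card_real]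
  have hiff : c'' \ c = ∅ ↔ c'' = c := by
    rw [Finset.sdiff_eq_empty_iff_subset]
    exact ⟨fun hs => le_antisymm hs h, fun he => he ▸ subset_refl c⟩
  by_cases he : c'' = c
  · rw [if_pos (hiff.mpr he), if_pos he, hiff.mpr he]
    simp
  · rw [if_neg (fun hs => he (hiff.mp hs)), if_neg he, mul_zero]

lemma mobius_sum {A : Type*} [Fintype A] [DecidableEq A] (I : A → A → Prop)
    (F H : Finset A → ℝ)
    (hH : ∀ c, H c = ∑ c' ∈ Finset.univ.filter
        (fun c' : Finset A => (↑c' : Set A).Pairwise I ∧ c ⊆ c'),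
      (-1 : ℝ) ^ (c'.card - c.card) * F c')
    (c : Finset A) (hc : (↑c : Set A).Pairwise I) :
    ∑ c' ∈ Finset.univ.filter
        (fun c' : Finset A => (↑c' : Set A).Pairwise I ∧ c ⊆ c'), H c' = F c := by
  classical
  have step1 : ∑ c' ∈ Finset.univ.filter
        (fun c' : Finset A => (↑c' : Set A).Pairwise I ∧ c ⊆ c'), H c' =
      ∑ c' ∈ (Finset.univ : Finset (Finset A)), ∑ c'' ∈ (Finset.univ : Finset (Finset A)),
        if ((↑c' : Set A).Pairwise I ∧ c ⊆ c') then
          (if ((↑c'' : Set A).Pairwise I ∧ c' ⊆ c'') then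
            (-1 : ℝ) ^ (c''.card - c'.card) * F c'' else 0) else 0 := by
    rw [Finset.sum_filter]
    refine Finset.sum_congr rfl fun c' _ => ?_
    split_ifs with hq
    · rw [hH, Finset.sum_filter]
    · simp
  rw [step1, Finset.sum_comm]
  have step2 : ∀ c'' : Finset A,
      (∑ c' ∈ (Finset.univ : Finset (Finset A)),
        if ((↑c' : Set A).Pairwise I ∧ c ⊆ c') then
          (if ((↑c'' : Set A).Pairwise I ∧ c' ⊆ c'') then
            (-1 : ℝ) ^ (c''.card - c'.card) * F c'' else 0) else 0) =
      if c'' = c then F c else 0 := by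
    intro c''
    by_cases hP : (↑c'' : Set A).Pairwise I
    · by_cases hsub : c ⊆ c''
      · have hmono : ∀ c' : Finset A, c' ⊆ c'' → (↑c' : Set A).Pairwise I :=
          fun c' hs => hP.mono (Finset.coe_subset.mpr hs)
        have hterm : ∀ c' ∈ (Finset.univ : Finset (Finset A)),
            (if ((↑c' : Set A).Pairwise I ∧ c ⊆ c') then
              (if ((↑c'' : Set A).Pairwise I ∧ c' ⊆ c'') then
                (-1 : ℝ) ^ (c''.card - c'.card) * F c'' else 0) else 0) =
            (if (c ⊆ c' ∧ c' ⊆ c'') then (-1 : ℝ) ^ (c''.card - c'.card) else 0) * F c'' := by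
          intro c' _
          by_cases h3 : c ⊆ c' ∧ c' ⊆ c''
          · rw [if_pos h3, if_pos ⟨hmono c' h3.2, h3.1⟩, if_pos ⟨hP, h3.2⟩]
          · rw [if_neg h3, zero_mul]
            by_cases h1 : (↑c' : Set A).Pairwise I ∧ c ⊆ c'
            · rw [if_pos h1, if_neg (fun h2 => h3 ⟨h1.2, h2.2⟩)]
            · rw [if_neg h1]
        rw [Finset.sum_congr rfl hterm, ← Finset.sum_mul]
        have hIcc : ∑ c' ∈ (Finset.univ : Finset (Finset A)),
            (if (c ⊆ c' ∧ c' ⊆ c'') then ((-1 : ℝ)) ^ (c''.card - c'.card) else 0) =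
            ∑ c' ∈ Finset.Icc c c'', ((-1 : ℝ)) ^ (c''.card - c'.card) := by
          rw [← Finset.sum_filter]
          refine Finset.sum_congr ?_ fun _ _ => rfl
          ext c'
          simp [Finset.mem_Icc]
        rw [hIcc, sum_interval_neg_one c c'' hsub]
        by_cases he : c'' = c
        · rw [if_pos he, if_pos he, one_mul, he]
        · rw [if_neg he, if_neg he, zero_mul]
      · rw [if_neg (show ¬ c'' = c from fun he => hsub (by rw [he]))]
        refine Finset.sum_eq_zero fun c' _ => ?_
        split_ifs with h1 h2
        · exact absurd (h1.2.trans h2.2) hsub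
        · rfl
        · rfl
    · rw [if_neg (show ¬ c'' = c from fun he => hP (by rw [he]; exact hc))]
      refine Finset.sum_eq_zero fun c' _ => ?_
      split_ifs with h1 h2
      · exact absurd h2.1 hP
      · rfl
      · rfl
  rw [Finset.sum_congr rfl fun c'' _ => step2 c'', Finset.sum_ite_eq']
  simp

end Aux

/-- in a non-trivial concurrent system with `Σ_α ≠ ∅` for every state,
if the dominant valuation is probabilistic (its Möbius transform `h_α` vanishes on
the empty clique and is nonnegative on nonempty cliques) then the system is
deterministic: any two distinct letters enabled at a common state commute. -/
theorem stmt14 {A X : Type*} [Fintype A] [DecidableEq A] [Fintype X] {I : A → A → Prop}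
    (hsym : Symmetric I) (hirr : Irreflexive I) (S : CS A I X)
    (hnontriv : ∃ (α : X) (a : A), S.Enabled α a)
    (hne : ∀ α : X, ∃ a : A, S.Enabled α a)
    (f : X → TraceMonoid A I → ℝ)
    (hf : ∀ (α : X) (x : TraceMonoid A I),
      f α x = if S.act (some α) x ≠ none then 1 else 0)
    (h : X → Finset A → ℝ)
    (hh : ∀ (α : X) (c : Finset A), h α c =
      ∑ c' ∈ Finset.univ.filter (fun c' : Finset A => (↑c' : Set A).Pairwise I ∧ c ⊆ c'),
        (-1 : ℝ) ^ (c'.card - c.card) * f α (fprod I c'))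
    (hprob : ∀ α : X, h α ∅ = 0 ∧
      ∀ c : Finset A, (↑c : Set A).Pairwise I → c ≠ ∅ → 0 ≤ h α c) :
    S.Deterministic := by
  classical
  intro α a b hab ha hb
  by_contra hIab
  -- Möbius inversion instances
  have hmob := mobius_sum I (fun c => f α (fprod I c)) (fun c => h α c) (fun c => hh α c)
  -- values of f on the empty and singleton cliques
  have hfe : f α (fprod I (∅ : Finset A)) = 1 := by
    have : fprod I (∅ : Finset A) = 1 := by
      simp [fprod, listProd]
    rw [this, hf]
    rw [if_pos]
    rw [S.act_one]
    simp
  have hfa : f α (fprod I ({a} : Finset A)) = 1 := by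
    have : fprod I ({a} : Finset A) = trOf I a := by
      simp [fprod, listProd]
    rw [this, hf, if_pos (show S.act (some α) (trOf I a) ≠ none from ha)]
  have hfb : f α (fprod I ({b} : Finset A)) = 1 := by
    have : fprod I ({b} : Finset A) = trOf I b := by
      simp [fprod, listProd]
    rw [this, hf, if_pos (show S.act (some α) (trOf I b) ≠ none from hb)]
  have hpe : ((↑(∅ : Finset A)) : Set A).Pairwise I := by simp
  have hpa : ((↑({a} : Finset A)) : Set A).Pairwise I := by simp
  have hpb : ((↑({b} : Finset A)) : Set A).Pairwise I := by simp
  have h0 := hmob ∅ hpe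
  have h1 := hmob {a} hpa
  have h2 := hmob {b} hpb
  rw [hfe] at h0
  rw [hfa] at h1
  rw [hfb] at h2
  set Sa := Finset.univ.filter
      (fun c' : Finset A => (↑c' : Set A).Pairwise I ∧ ({a} : Finset A) ⊆ c') with hSa
  set Sb := Finset.univ.filter
      (fun c' : Finset A => (↑c' : Set A).Pairwise I ∧ ({b} : Finset A) ⊆ c') with hSb
  set T := Finset.univ.filter
      (fun c' : Finset A => (↑c' : Set A).Pairwise I ∧ (∅ : Finset A) ⊆ c') with hT
  have hdisj : Disjoint Sa Sb := by
    rw [Finset.disjoint_left]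
    intro c' hca hcb
    rw [hSa, Finset.mem_filter] at hca
    rw [hSb, Finset.mem_filter] at hcb
    have haa : a ∈ c' := hca.2.2 (Finset.mem_singleton_self a)
    have hbb : b ∈ c' := hcb.2.2 (Finset.mem_singleton_self b)
    exact hIab (hca.2.1 (by exact_mod_cast haa) (by exact_mod_cast hbb) hab)
  have hsubT : Sa ∪ Sb ⊆ T := by
    intro c' hc'
    rw [Finset.mem_union] at hc'
    rw [hT, Finset.mem_filter]
    rcases hc' with hc' | hc'
    · rw [hSa, Finset.mem_filter] at hc'
      exact ⟨hc'.1, hc'.2.1, Finset.empty_subset _⟩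
    · rw [hSb, Finset.mem_filter] at hc'
      exact ⟨hc'.1, hc'.2.1, Finset.empty_subset _⟩
  have hnn : ∀ c' ∈ T, c' ∉ Sa ∪ Sb → 0 ≤ h α c' := by
    intro c' hc' _
    rw [hT, Finset.mem_filter] at hc'
    by_cases he : c' = ∅
    · rw [he, (hprob α).1]
    · exact (hprob α).2 c' hc'.2.1 he
  have hsum : ∑ c' ∈ Sa ∪ Sb, h α c' ≤ ∑ c' ∈ T, h α c' :=
    Finset.sum_le_sum_of_subset_of_nonneg hsubT hnn
  rw [Finset.sum_union hdisj, h1, h2, h0] at hsum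
  linarith
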